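/- Let P be a real symmetric 3×3 matrix, let ω : ℝ → ℝ³ be continuous, and let R : ℝ → ℝ^{3×3} be differentiable with Ṙ(t) = R(t) ω̂(t) for all t. Then the function t ↦ ψ(R(t)) = ½ tr(P(I − R(t))) is differentiable with derivative d/dt ψ(R(t)) = ⟨e_R(R(t)), ω(t)⟩, where e_R(R) = vee(½(PR − RᵀP)). -/

import Mathlib

open Matrix

attribute [local instance] Matrix.normedAddCommGroup Matrix.normedSpace

/-- The vee map, inverse of the hat map on skew-symmetric matrices. -/
def vee (A : Matrix (Fin 3) (Fin 3) ℝ) : Fin 3 → ℝ :=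
  ![A 2 1, A 0 2, A 1 0]

/-- The configuration error function `ψ(R) = ½ tr(P(I − R))`. -/
noncomputable def ψ (P R : Matrix (Fin 3) (Fin 3) ℝ) : ℝ :=
  (1 / 2 : ℝ) * (P * (1 - R)).trace

/-- The attitude error vector `e_R(R) = vee(½(PR − RᵀP))`. -/
noncomputable def eR (P R : Matrix (Fin 3) (Fin 3) ℝ) : Fin 3 → ℝ :=
  vee ((1 / 2 : ℝ) • (P * R - Rᵀ * P))

/-- The hat map sending `v ∈ ℝ³` to the skew-symmetric matrix `v̂` with `v̂ w = v × w`. -/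
def hat (v : Fin 3 → ℝ) : Matrix (Fin 3) (Fin 3) ℝ :=
  !![0, -v 2, v 1; v 2, 0, -v 0; -v 1, v 0, 0]

/-- If `P` is symmetric, `ω` is continuous and `Ṙ = R ω̂`, then
`d/dt ψ(R(t)) = ⟨e_R(R(t)), ω(t)⟩`. -/
theorem deriv_configuration_error
    (P : Matrix (Fin 3) (Fin 3) ℝ) (hPsymm : P.IsSymm)
    (ω : ℝ → Fin 3 → ℝ) (hω : Continuous ω)
    (R : ℝ → Matrix (Fin 3) (Fin 3) ℝ)
    (hR : ∀ t, HasDerivAt R (R t * hat (ω t)) t) :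
    ∀ t, HasDerivAt (fun s => ψ P (R s)) (eR P (R t) ⬝ᵥ ω t) t := by
  intro t
  -- linear map A ↦ tr (P * A)
  set L : Matrix (Fin 3) (Fin 3) ℝ →ₗ[ℝ] ℝ :=
    (Matrix.traceLinearMap (Fin 3) ℝ ℝ).comp (LinearMap.mulLeft ℝ P) with hL
  have hclm := (LinearMap.toContinuousLinearMap L).hasFDerivAt.comp_hasDerivAt t (hR t)
  have h1 : HasDerivAt (fun s => (P * R s).trace) ((P * (R t * hat (ω t))).trace) t := hclm
  have h2 : HasDerivAt (fun s => ψ P (R s))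
      ((1/2 : ℝ) * (0 - (P * (R t * hat (ω t))).trace)) t := by
    have := ((hasDerivAt_const t (P : Matrix (Fin 3) (Fin 3) ℝ).trace).sub h1).const_mul
      (1/2 : ℝ)
    refine this.congr_of_eventuallyEq (Filter.Eventually.of_forall fun s => ?_)
    simp [ψ, Matrix.mul_sub, Matrix.mul_one]
  convert h2 using 1
  have hs : ∀ i j, P j i = P i j := fun i j => hPsymm.apply i j
  simp only [eR, vee, hat, dotProduct, trace, Matrix.mul_apply, diag,
    Matrix.smul_apply, Matrix.sub_apply, Matrix.transpose_apply, Fin.sum_univ_three,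
    smul_eq_mul]
  norm_num [Matrix.cons_val_zero, Matrix.cons_val_one, Matrix.head_cons,
    Matrix.cons_val_two, Matrix.tail_cons, Matrix.cons_val', Matrix.empty_val',
    Matrix.cons_val_fin_one, Matrix.head_fin_const]
  rw [hs 1 0, hs 2 0, hs 2 1]
  ring
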